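/- Let Σ := ℕ ∖ {1} = {0, 2, 3, 4, 5, …}, an additive submonoid of ℤ. Then every nonempty ideal of Σ is a constructible right ideal of Σ, and the set of constructible right ideals of Σ is the disjoint union 𝔍(Σ) = {p + Σ : p ∈ Σ} ⊔ {p + (2 + ℕ) : p ∈ Σ} ⊔ {3 + ℕ}; in particular ∅ ∉ 𝔍(Σ), and every nonempty ideal I ⊆ Σ equals m + Σ or m + ℕ, where m = min I. -/

import Mathlib

/-- The numerical semigroup `Σ = ℕ ∖ {1} = {0, 2, 3, 4, …}` as a subset of `ℤ`. -/
def Sig : Set ℤ := {x : ℤ | x = 0 ∨ 2 ≤ x}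

/-- A word `(p₁, …, p_{2k})` in `Σ` (encoded by consecutive pairs) has all entries in `Σ`. -/
def InSig (w : List (ℤ × ℤ)) : Prop := ∀ x ∈ w, x.1 ∈ Sig ∧ x.2 ∈ Sig

/-- The iterated quotient set (in additive notation)
`Q(α) = {0, −p_{2k}+p_{2k-1}, −p_{2k}+p_{2k-1}−p_{2k-2}+p_{2k-3}, …}`. -/
def SQset (w : List (ℤ × ℤ)) : Set ℤ :=
  {g : ℤ | ∃ n : ℕ, ((w.reverse.map fun x => -x.2 + x.1).take n).sum = g}

/-- The constructible ideal `K(α) = ⋂_{g∈Q(α)} (g + Σ)`. -/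
def SKset (w : List (ℤ × ℤ)) : Set ℤ := ⋂ g ∈ SQset w, {x : ℤ | x - g ∈ Sig}

/-- The constructible right ideals of `Σ`. -/
def SCIdeals : Set (Set ℤ) := {S | ∃ w : List (ℤ × ℤ), InSig w ∧ SKset w = S}

lemma mem_SK {w : List (ℤ × ℤ)} {x : ℤ} :
    x ∈ SKset w ↔ ∀ g ∈ SQset w, x - g ∈ Sig := by simp [SKset]

lemma maxPS (l : List ℤ) : ∃ M, (∃ n, (l.take n).sum = M) ∧ ∀ n, (l.take n).sum ≤ M := by
  induction l with
  | nil => exact ⟨0, ⟨0, rfl⟩, fun n => by simp⟩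
  | cons a t ih =>
    obtain ⟨M, ⟨n, hn⟩, hle⟩ := ih
    refine ⟨max 0 (a + M), ?_, ?_⟩
    · rcases le_total (a + M) 0 with h | h
      · exact ⟨0, by simpa using (max_eq_left h).symm⟩
      · exact ⟨n + 1, by simp [hn, max_eq_right h]⟩
    · intro n'
      rcases n' with _ | n'
      · simp
      · simp only [List.take_succ_cons, List.sum_cons]
        have h1 := hle n'
        have h2 := le_max_right 0 (a + M)
        omega

lemma SK_form (w : List (ℤ × ℤ)) :
    (∃ p ∈ Sig, SKset w = {x : ℤ | x - p ∈ Sig}) ∨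
    (∃ p ∈ Sig, SKset w = {x : ℤ | p + 2 ≤ x}) ∨
    SKset w = {x : ℤ | 3 ≤ x} := by
  obtain ⟨M, ⟨nM, hnM⟩, hle⟩ := maxPS (w.reverse.map fun x => -x.2 + x.1)
  have hMQ : M ∈ SQset w := ⟨nM, hnM⟩
  have h0Q : (0:ℤ) ∈ SQset w := ⟨0, by simp⟩
  have hQle : ∀ g ∈ SQset w, g ≤ M := by rintro g ⟨n, rfl⟩; exact hle n
  have hM0 : 0 ≤ M := hQle 0 h0Q
  by_cases hB : M - 1 ∈ SQset w
  · have hK : SKset w = {x : ℤ | M + 2 ≤ x} := by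
      ext x
      rw [mem_SK]
      constructor
      · intro hx
        have h1 := hx M hMQ
        have h2 := hx (M-1) hB
        simp only [Sig, Set.mem_setOf_eq] at h1 h2 ⊢
        omega
      · intro hx g hg
        have := hQle g hg
        simp only [Set.mem_setOf_eq] at hx
        simp only [Sig, Set.mem_setOf_eq]
        omega
    by_cases hM1 : M = 1
    · right; right; rw [hK, hM1]; norm_num
    · right; left
      exact ⟨M, by simp only [Sig, Set.mem_setOf_eq]; omega, hK⟩
  · have hM1 : M ≠ 1 := by
      rintro rfl
      exact hB (by simpa using h0Q)
    left
    refine ⟨M, by simp only [Sig, Set.mem_setOf_eq]; omega, ?_⟩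
    ext x
    rw [mem_SK]
    constructor
    · intro hx; exact hx M hMQ
    · intro hx g hg
      have hgM := hQle g hg
      have hg1 : g ≠ M - 1 := fun h => hB (h ▸ hg)
      simp only [Sig, Set.mem_setOf_eq] at hx ⊢
      omega

lemma SQ_single (a b : ℤ) : SQset [(a, b)] = {0, -b + a} := by
  ext g
  constructor
  · rintro ⟨n, rfl⟩
    rcases n with _ | n <;> simp
  · rintro (rfl | rfl)
    exacts [⟨0, rfl⟩, ⟨1, by simp⟩]

lemma SQ_pair (a b c d : ℤ) :
    SQset [(a, b), (c, d)] = {0, -d + c, -d + c + (-b + a)} := by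
  ext g
  constructor
  · rintro ⟨n, rfl⟩
    rcases n with _ | _ | n <;> simp
  · rintro (rfl | rfl | rfl)
    exacts [⟨0, rfl⟩, ⟨1, by simp⟩, ⟨2, by simp⟩]

lemma constr1 {p : ℤ} (hp : p ∈ Sig) :
    ∃ w : List (ℤ × ℤ), InSig w ∧ SKset w = {x : ℤ | x - p ∈ Sig} := by
  refine ⟨[(p, 0)], ?_, ?_⟩
  · rintro x hx
    simp only [List.mem_singleton] at hx
    subst hx
    exact ⟨hp, Or.inl rfl⟩
  · ext x
    rw [mem_SK, SQ_single]
    simp only [Set.mem_insert_iff, Set.mem_singleton_iff, forall_eq_or_imp, forall_eq,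
      Sig, Set.mem_setOf_eq] at *
    rcases hp with rfl | hp <;> constructor <;> intros <;> omega

lemma constr3 : ∃ w : List (ℤ × ℤ), InSig w ∧ SKset w = {x : ℤ | 3 ≤ x} := by
  refine ⟨[(3, 2)], ?_, ?_⟩
  · rintro x hx
    simp only [List.mem_singleton] at hx
    subst hx
    exact ⟨Or.inr (by norm_num), Or.inr le_rfl⟩
  · ext x
    rw [mem_SK, SQ_single]
    simp only [Set.mem_insert_iff, Set.mem_singleton_iff, forall_eq_or_imp, forall_eq,
      Sig, Set.mem_setOf_eq]
    omega

lemma constr2 {p : ℤ} (hp : p ∈ Sig) :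
    ∃ w : List (ℤ × ℤ), InSig w ∧ SKset w = {x : ℤ | p + 2 ≤ x} := by
  rcases hp with rfl | hp
  · refine ⟨[(2, 3)], ?_, ?_⟩
    · rintro x hx
      simp only [List.mem_singleton] at hx
      subst hx
      exact ⟨Or.inr le_rfl, Or.inr (by norm_num)⟩
    · ext x
      rw [mem_SK, SQ_single]
      simp only [Set.mem_insert_iff, Set.mem_singleton_iff, forall_eq_or_imp, forall_eq,
        Sig, Set.mem_setOf_eq]
      omega
  · refine ⟨[(3, 2), (p + 1, 2)], ?_, ?_⟩
    · rintro x hx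
      simp only [List.mem_cons, List.mem_singleton, List.not_mem_nil, or_false] at hx
      rcases hx with rfl | rfl
      · exact ⟨Or.inr (by norm_num), Or.inr le_rfl⟩
      · exact ⟨Or.inr (by omega), Or.inr le_rfl⟩
    · ext x
      rw [mem_SK, SQ_pair]
      simp only [Set.mem_insert_iff, Set.mem_singleton_iff, forall_eq_or_imp, forall_eq,
        Sig, Set.mem_setOf_eq]
      constructor
      · rintro ⟨h1, h2, h3⟩; omega
      · intro h; omega

lemma SCIdeals_eq :
    SCIdeals = ({S | ∃ p ∈ Sig, S = {x : ℤ | x - p ∈ Sig}} ∪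
      {S | ∃ p ∈ Sig, S = {x : ℤ | p + 2 ≤ x}} ∪ {S | S = {x : ℤ | 3 ≤ x}}) := by
  ext S
  constructor
  · rintro ⟨w, -, rfl⟩
    rcases SK_form w with ⟨p, hp, h⟩ | ⟨p, hp, h⟩ | h
    · exact Or.inl (Or.inl ⟨p, hp, h⟩)
    · exact Or.inl (Or.inr ⟨p, hp, h⟩)
    · exact Or.inr h
  · rintro ((⟨p, hp, rfl⟩ | ⟨p, hp, rfl⟩) | h)
    · exact constr1 hp
    · exact constr2 hp
    · rw [Set.mem_setOf_eq] at h
      rw [h]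
      exact constr3

lemma ideal_form (I : Set ℤ) (hsub : I ⊆ Sig) (hne : I.Nonempty)
    (hcl : ∀ x ∈ I, ∀ s ∈ Sig, x + s ∈ I) :
    ∃ m ∈ I, (∀ x ∈ I, m ≤ x) ∧
      (I = {x : ℤ | x - m ∈ Sig} ∨ I = {x : ℤ | m ≤ x}) := by
  have hbdd : ∃ b : ℤ, ∀ z : ℤ, z ∈ I → b ≤ z := by
    refine ⟨0, fun z hz => ?_⟩
    have := hsub hz
    simp only [Sig, Set.mem_setOf_eq] at this
    omega
  obtain ⟨m, hmI, hmin⟩ := Int.exists_least_of_bdd hbdd hne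
  refine ⟨m, hmI, hmin, ?_⟩
  by_cases h1 : m + 1 ∈ I
  · right
    ext x
    simp only [Set.mem_setOf_eq]
    constructor
    · exact hmin x
    · intro hx
      rcases eq_or_lt_of_le hx with rfl | hlt
      · exact hmI
      · rcases eq_or_lt_of_le (Int.add_one_le_of_lt hlt) with h | h
        · exact h ▸ h1
        · have : x - m ∈ Sig := by
            simp only [Sig, Set.mem_setOf_eq]; omega
          have := hcl m hmI (x - m) this
          simpa using this
  · left
    ext x
    simp only [Sig, Set.mem_setOf_eq]
    constructor
    · intro hx
      have hge := hmin x hx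
      have hne1 : x ≠ m + 1 := fun h => h1 (h ▸ hx)
      omega
    · intro hx
      rcases hx with hx | hx
      · have : x = m := by omega
        exact this ▸ hmI
      · have : x - m ∈ Sig := by
          simp only [Sig, Set.mem_setOf_eq]; omega
        have := hcl m hmI (x - m) this
        simpa using this

theorem statement17 :
    (∀ I : Set ℤ, I ⊆ Sig → I.Nonempty → (∀ x ∈ I, ∀ s ∈ Sig, x + s ∈ I) →
      I ∈ SCIdeals) ∧
    SCIdeals = ({S | ∃ p ∈ Sig, S = {x : ℤ | x - p ∈ Sig}} ∪
      {S | ∃ p ∈ Sig, S = {x : ℤ | p + 2 ≤ x}} ∪ {S | S = {x : ℤ | 3 ≤ x}}) ∧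
    ({S | ∃ p ∈ Sig, S = {x : ℤ | x - p ∈ Sig}} ∩
      {S | ∃ p ∈ Sig, S = {x : ℤ | p + 2 ≤ x}} = (∅ : Set (Set ℤ))) ∧
    ({S | ∃ p ∈ Sig, S = {x : ℤ | x - p ∈ Sig}} ∩
      {S | S = {x : ℤ | 3 ≤ x}} = (∅ : Set (Set ℤ))) ∧
    ({S | ∃ p ∈ Sig, S = {x : ℤ | p + 2 ≤ x}} ∩
      {S | S = {x : ℤ | 3 ≤ x}} = (∅ : Set (Set ℤ))) ∧
    (∅ : Set ℤ) ∉ SCIdeals ∧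
    (∀ I : Set ℤ, I ⊆ Sig → I.Nonempty → (∀ x ∈ I, ∀ s ∈ Sig, x + s ∈ I) →
      ∃ m ∈ I, (∀ x ∈ I, m ≤ x) ∧
        (I = {x : ℤ | x - m ∈ Sig} ∨ I = {x : ℤ | m ≤ x})) := by
  have hideal : ∀ I : Set ℤ, I ⊆ Sig → I.Nonempty → (∀ x ∈ I, ∀ s ∈ Sig, x + s ∈ I) →
      I ∈ SCIdeals := by
    intro I hsub hne hcl
    obtain ⟨m, hmI, hmin, hI⟩ := ideal_form I hsub hne hcl
    have hmS : m ∈ Sig := hsub hmI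
    rcases hI with rfl | rfl
    · exact constr1 hmS
    · -- I = {x | m ≤ x}; since I ⊆ Sig and m ≤ m+1, m must satisfy 2 ≤ m
      have hm2 : 2 ≤ m := by
        by_contra h
        push_neg at h
        have h1 : (1:ℤ) ∈ {x : ℤ | m ≤ x} := by
          simp only [Set.mem_setOf_eq]
          simp only [Sig, Set.mem_setOf_eq] at hmS
          omega
        have := hsub h1
        simp only [Sig, Set.mem_setOf_eq] at this
        omega
      by_cases hm3 : m = 3
      · obtain ⟨w, hw, hK⟩ := constr3
        exact ⟨w, hw, by rw [hK, hm3]⟩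
      · have : m - 2 ∈ Sig := by
          simp only [Sig, Set.mem_setOf_eq]; omega
        obtain ⟨w, hw, hK⟩ := constr2 this
        refine ⟨w, hw, ?_⟩
        rw [hK]
        ext x
        simp only [Set.mem_setOf_eq]
        omega
  refine ⟨hideal, SCIdeals_eq, ?_, ?_, ?_, ?_, ideal_form⟩
  · ext S
    simp only [Set.mem_inter_iff, Set.mem_setOf_eq, Set.mem_empty_iff_false, iff_false,
      not_and]
    rintro ⟨p, hp, rfl⟩ ⟨q, hq, hEq⟩
    have h1 := Set.ext_iff.mp hEq p
    have h2 := Set.ext_iff.mp hEq (p + 1)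
    simp only [Sig, Set.mem_setOf_eq] at h1 h2 hp hq
    omega
  · ext S
    simp only [Set.mem_inter_iff, Set.mem_setOf_eq, Set.mem_empty_iff_false, iff_false,
      not_and]
    rintro ⟨p, hp, rfl⟩ hEq
    have h1 := Set.ext_iff.mp hEq p
    have h2 := Set.ext_iff.mp hEq (p + 1)
    simp only [Sig, Set.mem_setOf_eq] at h1 h2 hp
    omega
  · ext S
    simp only [Set.mem_inter_iff, Set.mem_setOf_eq, Set.mem_empty_iff_false, iff_false,
      not_and]
    rintro ⟨p, hp, rfl⟩ hEq
    have h1 := Set.ext_iff.mp hEq (p + 2)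
    have h2 := Set.ext_iff.mp hEq 3
    simp only [Sig, Set.mem_setOf_eq] at h1 h2 hp
    omega
  · rw [SCIdeals_eq]
    rintro ((⟨p, hp, hEq⟩ | ⟨p, hp, hEq⟩) | hEq)
    · have hm : p ∈ {x : ℤ | x - p ∈ Sig} := by simp [Sig]
      rw [← hEq] at hm
      exact hm
    · have hm : p + 2 ∈ {x : ℤ | p + 2 ≤ x} := Set.mem_setOf_eq ▸ le_rfl
      rw [← hEq] at hm
      exact hm
    · rw [Set.mem_setOf_eq] at hEq
      have hm : (3:ℤ) ∈ {x : ℤ | 3 ≤ x} := Set.mem_setOf_eq ▸ le_rfl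
      rw [← hEq] at hm
      exact hm
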